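/- Fix W ∈ {0,1}^T with (1/T)·Σ_t W_t < 1 and vectors ψ_1,…,ψ_T ∈ ℝ^p. For each γ ∈ ℝ^p, the function α ↦ (1/T)·Σ_{t=1}^T ρ_{W_t}(W_t − α − ψ_tᵀγ) has a unique minimizer g(γ) over α ∈ ℝ. Moreover, if ‖ψ_t‖_∞ ≤ K for all t, then γ ↦ g(γ) is Lipschitz continuous with a Lipschitz constant depending only on K, p and T (uniformly over all such W and ψ). -/

import Mathlib

open scoped BigOperators

/-- The loss `ρ_z(x) = x²·(1−z) + (max(x,0))²·z`. -/
noncomputable def drRho (z x : ℝ) : ℝ := x ^ 2 * (1 - z) + (max x 0) ^ 2 * z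

/-- "Derivative" of `α ↦ drRho w (w - α - c)` (valid for `w ∈ {0,1}`). -/
noncomputable def drD (w α c : ℝ) : ℝ :=
  2 * (α + c - w) * (1 - w) - 2 * (max (w - α - c) 0) * w

lemma drRho_lower (w : ℝ) (hw : w = 0 ∨ w = 1) (α α' c : ℝ) :
    drRho w (w - α - c) + drD w α c * (α' - α) ≤ drRho w (w - α' - c) := by
  rcases hw with h | h <;> subst h <;> simp only [drRho, drD]
  · nlinarith [sq_nonneg (α - α')]
  · rcases le_total (1 - α - c) 0 with hb | hb <;>
      rcases le_total (1 - α' - c) 0 with ha | ha <;>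
      [rw [max_eq_right hb, max_eq_right ha];
       rw [max_eq_right hb, max_eq_left ha];
       rw [max_eq_left hb, max_eq_right ha];
       rw [max_eq_left hb, max_eq_left ha]] <;>
      nlinarith [sq_nonneg (α - α')]

lemma drRho_upper (w : ℝ) (hw : w = 0 ∨ w = 1) (α α' c : ℝ) :
    drRho w (w - α' - c) ≤ drRho w (w - α - c) + drD w α c * (α' - α) + (α' - α) ^ 2 := by
  rcases hw with h | h <;> subst h <;> simp only [drRho, drD]
  · nlinarith [sq_nonneg (α - α')]
  · rcases le_total (1 - α - c) 0 with hb | hb <;>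
      rcases le_total (1 - α' - c) 0 with ha | ha <;>
      [rw [max_eq_right hb, max_eq_right ha];
       rw [max_eq_right hb, max_eq_left ha];
       rw [max_eq_left hb, max_eq_right ha];
       rw [max_eq_left hb, max_eq_left ha]] <;>
      nlinarith [sq_nonneg (α - α')]

lemma drD_mono (w : ℝ) (hw : w = 0 ∨ w = 1) {α c α' c' : ℝ} (h : α + c ≤ α' + c') :
    drD w α c ≤ drD w α' c' := by
  rcases hw with h0 | h0 <;> subst h0 <;> simp only [drD]
  · nlinarith
  · have : max (1 - α' - c') 0 ≤ max (1 - α - c) 0 :=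
      max_le_max (by linarith) le_rfl
    nlinarith

lemma drD_cont (w c : ℝ) : Continuous fun α : ℝ => drD w α c := by
  unfold drD; fun_prop


lemma drClaimA (T : ℕ) (hT : 0 < T) (W c : Fin T → ℝ) (hW : ∀ t, W t = 0 ∨ W t = 1)
    (α : ℝ) (h0 : ∑ t, drD (W t) α (c t) = 0) (α' : ℝ) :
    (1 / (T : ℝ)) * ∑ t, drRho (W t) (W t - α - c t)
      ≤ (1 / (T : ℝ)) * ∑ t, drRho (W t) (W t - α' - c t) := by
  have key : ∑ t, (drRho (W t) (W t - α - c t) + drD (W t) α (c t) * (α' - α))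
      ≤ ∑ t, drRho (W t) (W t - α' - c t) :=
    Finset.sum_le_sum fun t _ => drRho_lower _ (hW t) _ _ _
  rw [Finset.sum_add_distrib, ← Finset.sum_mul, h0, zero_mul, add_zero] at key
  have h1 : (0:ℝ) ≤ 1 / (T : ℝ) := by positivity
  exact mul_le_mul_of_nonneg_left key h1

lemma drClaimB (T : ℕ) (hT : 0 < T) (W c : Fin T → ℝ) (hW : ∀ t, W t = 0 ∨ W t = 1)
    (α : ℝ)
    (hmin : ∀ α', (1 / (T : ℝ)) * ∑ t, drRho (W t) (W t - α - c t)
      ≤ (1 / (T : ℝ)) * ∑ t, drRho (W t) (W t - α' - c t)) :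
    ∑ t, drD (W t) α (c t) = 0 := by
  have hTpos : (0:ℝ) < T := by exact_mod_cast hT
  set D := ∑ t, drD (W t) α (c t) with hDdef
  by_contra hD
  set α' := α - D / (2 * T) with hα'
  clear_value α'
  have upper : ∑ t, drRho (W t) (W t - α' - c t)
      ≤ ∑ t, drRho (W t) (W t - α - c t) + D * (α' - α) + (T:ℝ) * (α' - α) ^ 2 := by
    have h := Finset.sum_le_sum fun t (_ : t ∈ Finset.univ) => drRho_upper (W t) (hW t) α α' (c t)
    rw [Finset.sum_add_distrib, Finset.sum_add_distrib, ← Finset.sum_mul, Finset.sum_const,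
      Finset.card_univ, Fintype.card_fin, nsmul_eq_mul] at h
    exact h
  have hstep : D * (α' - α) + (T:ℝ) * (α' - α) ^ 2 = -(D ^ 2 / (4 * T)) := by
    rw [hα']; field_simp; ring
  have hDsq : 0 < D ^ 2 := by rcases lt_or_gt_of_ne hD with h | h <;> nlinarith
  have h2 : 0 < D ^ 2 / (4 * T) := by positivity
  have h1 := hmin α'
  have h3 : ∑ t, drRho (W t) (W t - α - c t) ≤ ∑ t, drRho (W t) (W t - α' - c t) := by
    exact (mul_le_mul_iff_right₀ (show (0:ℝ) < 1 / T by positivity)).mp h1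
  have hneg : D * (α' - α) + (T:ℝ) * (α' - α) ^ 2 < 0 := by
    rw [hstep]; exact neg_lt_zero.mpr h2
  linarith [upper, h3, hneg]

lemma drStrictMono (T : ℕ) (W c : Fin T → ℝ) (hW : ∀ t, W t = 0 ∨ W t = 1)
    (t₀ : Fin T) (ht₀ : W t₀ = 0) {α β : ℝ} (h : α < β) :
    ∑ t, drD (W t) α (c t) < ∑ t, drD (W t) β (c t) := by
  apply Finset.sum_lt_sum
  · exact fun t _ => drD_mono _ (hW t) (by linarith)
  · refine ⟨t₀, Finset.mem_univ _, ?_⟩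
    simp only [drD, ht₀]
    ring_nf
    nlinarith

lemma drExistsRoot (T : ℕ) (W c : Fin T → ℝ) (hW : ∀ t, W t = 0 ∨ W t = 1) :
    ∃ α, ∑ t, drD (W t) α (c t) = 0 := by
  obtain ⟨M, hM1, hMt⟩ : ∃ M : ℝ, 1 ≤ M ∧ ∀ t, |c t| ≤ M - 1 := by
    refine ⟨1 + ∑ t, |c t|, ?_, fun t => ?_⟩
    · have : (0:ℝ) ≤ ∑ t, |c t| := Finset.sum_nonneg fun t _ => abs_nonneg _
      linarith
    · have := Finset.single_le_sum (f := fun t => |c t|) (fun _ _ => abs_nonneg _)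
        (Finset.mem_univ t)
      linarith
  have ha : ∑ t, drD (W t) (-M) (c t) ≤ 0 := by
    apply Finset.sum_nonpos
    intro t _
    rcases hW t with h | h <;> simp only [drD, h]
    · have h1 := hMt t; have h2 := le_abs_self (c t); nlinarith
    · nlinarith [le_max_right (1 - -M - c t) (0:ℝ)]
  have hb : 0 ≤ ∑ t, drD (W t) M (c t) := by
    apply Finset.sum_nonneg
    intro t _
    rcases hW t with h | h <;> simp only [drD, h]
    · have h1 := hMt t; have h2 := neg_abs_le (c t); nlinarith
    · have h3 : (1:ℝ) - M - c t ≤ 0 := by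
        have h1 := hMt t; have h2 := neg_abs_le (c t); linarith
      rw [max_eq_right h3]; nlinarith
  have hcont : ContinuousOn (fun α => ∑ t, drD (W t) α (c t)) (Set.Icc (-M) M) :=
    (continuous_finset_sum _ fun t _ => drD_cont (W t) (c t)).continuousOn
  have hsub := intermediate_value_Icc (by linarith : -M ≤ M) hcont
  obtain ⟨α, _, hα⟩ := hsub ⟨ha, hb⟩
  exact ⟨α, hα⟩

lemma drMeanZero (T : ℕ) (hT : 0 < T) (W : Fin T → ℝ) (hW : ∀ t, W t = 0 ∨ W t = 1)
    (hmean : (1 / (T : ℝ)) * ∑ t, W t < 1) : ∃ t, W t = 0 := by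
  by_contra h
  push_neg at h
  have h1 : ∀ t, W t = 1 := fun t => (hW t).resolve_left (h t)
  have hTne : (T:ℝ) ≠ 0 := by positivity
  rw [Finset.sum_congr rfl fun t _ => h1 t] at hmean
  simp [Finset.card_univ, hTne] at hmean

lemma drKey (T : ℕ) (W : Fin T → ℝ) (hW : ∀ t, W t = 0 ∨ W t = 1)
    (t₀ : Fin T) (ht₀ : W t₀ = 0) (c₁ c₂ : Fin T → ℝ) (δ : ℝ)
    (hδ : ∀ t, c₁ t - c₂ t ≤ δ) (α₁ α₂ : ℝ)
    (h₁ : ∑ t, drD (W t) α₁ (c₁ t) = 0) (h₂ : ∑ t, drD (W t) α₂ (c₂ t) = 0) :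
    α₂ ≤ α₁ + δ := by
  by_contra hlt
  push_neg at hlt
  have hge : (0:ℝ) ≤ ∑ t, drD (W t) (α₁ + δ) (c₂ t) := by
    rw [← h₁]
    exact Finset.sum_le_sum fun t _ => drD_mono _ (hW t) (by linarith [hδ t])
  have hmono := drStrictMono T W c₂ hW t₀ ht₀ hlt
  rw [h₂] at hmono
  linarith

/-- **Lemma 2 (Properties of the profiled intercept).**
Fix `W ∈ {0,1}^T` with `(1/T)·Σ_t W_t < 1` and `ψ_1,…,ψ_T ∈ ℝ^p`.  For each
`γ ∈ ℝ^p` the function `α ↦ (1/T)·Σ_t ρ_{W_t}(W_t − α − ψ_tᵀγ)` has a unique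
minimizer `g(γ)`.  Moreover, if `‖ψ_t‖_∞ ≤ K` for all `t`, then `g` is
Lipschitz, with a Lipschitz constant depending only on `K`, `p` and `T`
(uniformly over all such `W` and `ψ`). -/
theorem profiled_intercept_unique_and_lipschitz
    (T p : ℕ) (hT : 0 < T) (K : ℝ) (hK : 0 < K) :
    -- for every W with mean < 1 and every ψ, γ: a unique minimizer exists
    (∀ (W : Fin T → ℝ), (∀ t, W t = 0 ∨ W t = 1) →
      (1 / (T : ℝ)) * ∑ t, W t < 1 →
      ∀ (ψ : Fin T → Fin p → ℝ) (γ : Fin p → ℝ),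
        ∃! α : ℝ, ∀ α' : ℝ,
          (1 / (T : ℝ)) * ∑ t, drRho (W t) (W t - α - ∑ j, ψ t j * γ j)
            ≤ (1 / (T : ℝ)) * ∑ t, drRho (W t) (W t - α' - ∑ j, ψ t j * γ j)) ∧
    -- a uniform Lipschitz constant depending only on K, p and T
    (∃ C : ℝ, 0 ≤ C ∧
      ∀ (W : Fin T → ℝ), (∀ t, W t = 0 ∨ W t = 1) →
      (1 / (T : ℝ)) * ∑ t, W t < 1 →
      ∀ (ψ : Fin T → Fin p → ℝ), (∀ t j, |ψ t j| ≤ K) →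
      ∀ g : (Fin p → ℝ) → ℝ,
        (∀ (γ : Fin p → ℝ) (α' : ℝ),
          (1 / (T : ℝ)) * ∑ t, drRho (W t) (W t - g γ - ∑ j, ψ t j * γ j)
            ≤ (1 / (T : ℝ)) * ∑ t, drRho (W t) (W t - α' - ∑ j, ψ t j * γ j)) →
        ∀ γ₁ γ₂ : Fin p → ℝ, |g γ₁ - g γ₂| ≤ C * ‖γ₁ - γ₂‖) := by
  constructor
  · intro W hW hmean ψ γ
    obtain ⟨t₀, ht₀⟩ := drMeanZero T hT W hW hmean
    obtain ⟨α, hα⟩ := drExistsRoot T W (fun t => ∑ j, ψ t j * γ j) hW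
    refine ⟨α, fun α' => drClaimA T hT W (fun t => ∑ j, ψ t j * γ j) hW α hα α', ?_⟩
    intro β hβ
    have hβ0 : ∑ t, drD (W t) β ((fun t => ∑ j, ψ t j * γ j) t) = 0 :=
      drClaimB T hT W (fun t => ∑ j, ψ t j * γ j) hW β hβ
    by_contra hne
    rcases lt_or_gt_of_ne hne with h | h
    · have := drStrictMono T W (fun t => ∑ j, ψ t j * γ j) hW t₀ ht₀ h
      rw [hβ0, hα] at this
      exact lt_irrefl _ this
    · have := drStrictMono T W (fun t => ∑ j, ψ t j * γ j) hW t₀ ht₀ h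
      rw [hβ0, hα] at this
      exact lt_irrefl _ this
  · refine ⟨K * p, by positivity, ?_⟩
    intro W hW hmean ψ hψ g hg γ₁ γ₂
    obtain ⟨t₀, ht₀⟩ := drMeanZero T hT W hW hmean
    set c₁ : Fin T → ℝ := fun t => ∑ j, ψ t j * γ₁ j with hc₁
    set c₂ : Fin T → ℝ := fun t => ∑ j, ψ t j * γ₂ j with hc₂
    have h₁ : ∑ t, drD (W t) (g γ₁) (c₁ t) = 0 := drClaimB T hT W c₁ hW (g γ₁) (hg γ₁)
    have h₂ : ∑ t, drD (W t) (g γ₂) (c₂ t) = 0 := drClaimB T hT W c₂ hW (g γ₂) (hg γ₂)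
    set δ := K * (p : ℝ) * ‖γ₁ - γ₂‖ with hδdef
    have hδ : ∀ t, |c₁ t - c₂ t| ≤ δ := by
      intro t
      have he : c₁ t - c₂ t = ∑ j, ψ t j * (γ₁ j - γ₂ j) := by
        simp only [hc₁, hc₂, ← Finset.sum_sub_distrib, mul_sub]
      rw [he]
      calc |∑ j, ψ t j * (γ₁ j - γ₂ j)| ≤ ∑ j, |ψ t j * (γ₁ j - γ₂ j)| :=
            Finset.abs_sum_le_sum_abs _ _
        _ ≤ ∑ _j : Fin p, K * ‖γ₁ - γ₂‖ := by
            refine Finset.sum_le_sum fun j _ => ?_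
            rw [abs_mul]
            have h1 : |γ₁ j - γ₂ j| ≤ ‖γ₁ - γ₂‖ := by
              have := norm_le_pi_norm (γ₁ - γ₂) j
              simpa using this
            exact mul_le_mul (hψ t j) h1 (abs_nonneg _) hK.le
        _ = δ := by
            rw [Finset.sum_const, Finset.card_univ, Fintype.card_fin, nsmul_eq_mul, hδdef]
            ring
    have hA : g γ₂ ≤ g γ₁ + δ :=
      drKey T W hW t₀ ht₀ c₁ c₂ δ (fun t => (abs_le.mp (hδ t)).2) (g γ₁) (g γ₂) h₁ h₂
    have hB : g γ₁ ≤ g γ₂ + δ :=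
      drKey T W hW t₀ ht₀ c₂ c₁ δ (fun t => by have := (abs_le.mp (hδ t)).1; linarith)
        (g γ₂) (g γ₁) h₂ h₁
    rw [abs_sub_le_iff]
    constructor <;> [linarith; linarith]
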